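/- Fix k ≥ 2 and 0 ≤ a ≤ k-1. The number D^{k,a}_{n,m} of generalized k-Dyck paths of depth a, semilength n, and semiheight m satisfies, for n ≥ 1: if m ≥ 1 then D^{k,a}_{n,m} = Σ_{j=0}^{k} C(k,j) · D^{k,a}_{n-1,m-1+j}, and if m = 0 then D^{k,a}_{n,0} = Σ_{j=1}^{k} (C(k,j) - C(k-a-1,j)) · D^{k,a}_{n-1,j-1}. -/

import Mathlib

open Finset PowerSeries

/-- The set of generalized `k`-Dyck paths of depth `a`, semilength `n` and semiheight `m`:
lattice paths from `(0,0)` to `(k*n, k*m)` using steps `U = (1,1)` and `D_{k-1} = (1,1-k)`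
that stay weakly above the line `y = -a`, encoded as lists of vertical displacements. -/
def DyckSet (k a n m : ℕ) : Set (List ℤ) :=
  {L | L.length = k * n ∧ L.sum = (k : ℤ) * m ∧
    (∀ s ∈ L, s = 1 ∨ s = 1 - (k : ℤ)) ∧
    ∀ i, -(a : ℤ) ≤ (L.take i).sum}

/-- `D k a n m` is the number of generalized `k`-Dyck paths of depth `a`,
semilength `n` and semiheight `m`. -/
noncomputable def D (k a n m : ℕ) : ℕ := Nat.card (DyckSet k a n m)

namespace DyckAux


noncomputable def allLists (k N : ℕ) : Finset (List ℤ) :=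
  (Finset.univ : Finset (Fin N → Bool)).image
    (fun f => List.ofFn (fun i => if f i then 1 - (k : ℤ) else 1))

lemma mem_allLists {k N : ℕ} (hk : 1 ≤ k) {L : List ℤ} :
    L ∈ allLists k N ↔ L.length = N ∧ ∀ s ∈ L, s = 1 ∨ s = 1 - (k : ℤ) := by
  have hne : (1 : ℤ) ≠ 1 - (k : ℤ) := by
    have : (1 : ℤ) ≤ (k : ℤ) := by exact_mod_cast hk
    omega
  constructor
  · rintro h
    simp only [allLists, Finset.mem_image] at h
    obtain ⟨f, -, rfl⟩ := h
    refine ⟨by simp, ?_⟩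
    intro s hs
    rw [List.mem_ofFn] at hs
    obtain ⟨i, hi⟩ := hs
    by_cases hfi : f i <;> simp [hfi] at hi <;> tauto
  · rintro ⟨hlen, hmem⟩
    simp only [allLists, Finset.mem_image]
    refine ⟨fun i => decide (L.get (Fin.cast hlen.symm i) ≠ 1), Finset.mem_univ _, ?_⟩
    apply List.ext_get (by simpa using hlen.symm)
    intro i h1 h2
    rw [List.get_ofFn]
    rcases hmem (L.get ⟨i, h2⟩) (L.get_mem _) with h | h <;>
      simp only [List.get_eq_getElem] at h <;> simp [Fin.cast, h, hne.symm]


open Classical in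
noncomputable def F (k a n m : ℕ) : Finset (List ℤ) :=
  (allLists k (k * n)).filter
    (fun L => L.sum = (k : ℤ) * m ∧ ∀ i, -(a : ℤ) ≤ (L.take i).sum)

open Classical in
lemma mem_F {k a n m : ℕ} (hk : 1 ≤ k) {L : List ℤ} :
    L ∈ F k a n m ↔ L.length = k * n ∧ (∀ s ∈ L, s = 1 ∨ s = 1 - (k : ℤ)) ∧
      L.sum = (k : ℤ) * m ∧ ∀ i, -(a : ℤ) ≤ (L.take i).sum := by
  simp only [F, Finset.mem_filter, mem_allLists hk]
  tauto

lemma D_eq {k a : ℕ} (hk : 1 ≤ k) (n m : ℕ) : D k a n m = (F k a n m).card := by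
  have h : DyckSet k a n m = ↑(F k a n m) := by
    ext L
    simp only [Finset.mem_coe, DyckSet, Set.mem_setOf_eq, mem_F hk]
    tauto
  rw [D, h, Nat.card_coe_set_eq, Set.ncard_coe_finset]

/-- sum of a list with entries ≤ 1 is at most its length -/
lemma sum_le_length {L : List ℤ} (h : ∀ s ∈ L, s ≤ 1) : L.sum ≤ (L.length : ℤ) := by
  induction L with
  | nil => simp
  | cons x t ih =>
    simp only [List.sum_cons, List.length_cons] at *
    have := h x (by simp)
    have := ih (fun s hs => h s (by simp [hs]))
    push_cast
    omega

lemma sum_le_length_sub {k : ℕ} {L : List ℤ} (h : ∀ s ∈ L, s = 1 ∨ s = 1 - (k : ℤ))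
    (hmem : (1 - (k : ℤ)) ∈ L) : L.sum ≤ (L.length : ℤ) - k := by
  obtain ⟨l₁, l₂, rfl⟩ := List.append_of_mem hmem
  have h1 : l₁.sum ≤ (l₁.length : ℤ) := sum_le_length (fun s hs => by
    rcases h s (by simp [hs]) with h' | h' <;> omega)
  have h2 : l₂.sum ≤ (l₂.length : ℤ) := sum_le_length (fun s hs => by
    rcases h s (by simp [hs]) with h' | h' <;> omega)
  simp only [List.sum_append, List.sum_cons, List.length_append, List.length_cons]
  push_cast
  omega

lemma sum_eq_count {k : ℕ} (hk : 1 ≤ k) {L : List ℤ}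
    (h : ∀ s ∈ L, s = 1 ∨ s = 1 - (k : ℤ)) :
    L.sum = (L.length : ℤ) - k * L.count (1 - (k : ℤ)) := by
  induction L with
  | nil => simp
  | cons x t ih =>
    have ht := ih (fun s hs => h s (by simp [hs]))
    have hne : (1 : ℤ) ≠ 1 - (k : ℤ) := by
      have : (1 : ℤ) ≤ (k : ℤ) := by exact_mod_cast hk
      omega
    have hne' : ¬((1 : ℤ) - (k : ℤ) = 1) := fun h' => hne h'.symm
    rcases h x (by simp) with rfl | rfl <;>
      simp only [List.sum_cons, List.length_cons, List.count_cons, beq_iff_eq] <;>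
      [rw [if_neg hne]; rw [if_pos trivial]] <;> push_cast <;> linarith


noncomputable def BJ (k N j : ℕ) : Finset (List ℤ) :=
  (Finset.powersetCard j (Finset.univ : Finset (Fin N))).image
    (fun s => List.ofFn (fun i => if i ∈ s then 1 - (k : ℤ) else 1))

lemma hne_step {k : ℕ} (hk : 1 ≤ k) : (1 : ℤ) ≠ 1 - (k : ℤ) := by
  have : (1 : ℤ) ≤ (k : ℤ) := by exact_mod_cast hk
  omega

lemma sum_ofFn_ite {k N : ℕ} (s : Finset (Fin N)) :
    (List.ofFn (fun i => if i ∈ s then 1 - (k : ℤ) else 1)).sum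
      = (N : ℤ) - k * s.card := by
  have h : ∀ i : Fin N, (if i ∈ s then 1 - (k : ℤ) else 1) = 1 - (if i ∈ s then (k : ℤ) else 0) := by
    intro i; split <;> ring
  rw [List.sum_ofFn]
  simp_rw [h]
  rw [Finset.sum_sub_distrib, Finset.sum_ite_mem, Finset.univ_inter, Finset.sum_const,
    Finset.sum_const]
  simp [mul_comm]

lemma mem_BJ {k N j : ℕ} (hk : 1 ≤ k) {L : List ℤ} :
    L ∈ BJ k N j ↔ L.length = N ∧ (∀ s ∈ L, s = 1 ∨ s = 1 - (k : ℤ)) ∧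
      L.count (1 - (k : ℤ)) = j := by
  have hne := hne_step hk
  constructor
  · rintro h
    simp only [BJ, Finset.mem_image] at h
    obtain ⟨s, hs, rfl⟩ := h
    rw [Finset.mem_powersetCard_univ] at hs
    have hlen : (List.ofFn (fun i => if i ∈ s then 1 - (k : ℤ) else 1)).length = N := by simp
    have hmem : ∀ x ∈ (List.ofFn (fun i => if i ∈ s then 1 - (k : ℤ) else 1)), x = 1 ∨ x = 1 - (k : ℤ) := by
      intro x hx
      rw [List.mem_ofFn] at hx
      obtain ⟨i, hi⟩ := hx
      by_cases h' : i ∈ s <;> simp [h'] at hi <;> tauto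
    refine ⟨hlen, hmem, ?_⟩
    have h1 := sum_eq_count hk hmem
    have h2 := sum_ofFn_ite (k := k) s
    rw [h2, hlen, hs] at h1
    have hk0 : (k : ℤ) ≠ 0 := by exact_mod_cast Nat.one_le_iff_ne_zero.mp hk
    have : (j : ℤ) = (List.count (1 - (k : ℤ)) (List.ofFn (fun i => if i ∈ s then 1 - (k : ℤ) else 1)) : ℤ) := by
      have := mul_left_cancel₀ hk0 (by linarith : (k : ℤ) * j = k * (List.count (1 - (k : ℤ)) _))
      linarith
    exact_mod_cast this.symm
  · rintro ⟨hlen, hmem, hcount⟩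
    simp only [BJ, Finset.mem_image]
    set s : Finset (Fin N) := Finset.univ.filter (fun i => L.get (Fin.cast hlen.symm i) ≠ 1) with hs
    have hofn : List.ofFn (fun i => if i ∈ s then 1 - (k : ℤ) else 1) = L := by
      apply List.ext_get (by simpa using hlen.symm)
      intro i h1 h2
      rw [List.get_ofFn]
      rcases hmem (L.get ⟨i, h2⟩) (L.get_mem _) with h | h <;>
        simp only [List.get_eq_getElem] at h <;> simp [hs, Fin.cast, h, hne.symm]
    refine ⟨s, ?_, hofn⟩
    rw [Finset.mem_powersetCard_univ]
    have h1 := sum_eq_count hk hmem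
    have h2 := sum_ofFn_ite (k := k) s
    rw [hofn, h1, hlen, hcount] at h2
    have hk0 : (k : ℤ) ≠ 0 := by exact_mod_cast Nat.one_le_iff_ne_zero.mp hk
    have : (s.card : ℤ) = (j : ℤ) := by
      have := mul_left_cancel₀ hk0 (by linarith : (k : ℤ) * s.card = k * j)
      linarith
    exact_mod_cast this

lemma card_BJ {k N j : ℕ} (hk : 1 ≤ k) : (BJ k N j).card = N.choose j := by
  have hne := hne_step hk
  rw [BJ, Finset.card_image_of_injOn, Finset.card_powersetCard, Finset.card_univ,
    Fintype.card_fin]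
  intro s _ t _ h
  have h' := List.ofFn_injective h
  ext i
  have := congrFun h' i
  by_cases h1 : i ∈ s <;> by_cases h2 : i ∈ t <;>
    simp only [h1, h2, if_true, if_false] at this <;> simp [h1, h2] <;> omega


lemma take_drop_sum (L : List ℤ) (i : ℕ) : (L.take i).sum + (L.drop i).sum = L.sum := by
  conv_rhs => rw [← List.take_append_drop i L]
  rw [List.sum_append]

lemma F_split_pos {k a n' m : ℕ} (hk : 1 ≤ k) (hm : 1 ≤ m) :
    F k a (n' + 1) m = (Finset.range (k + 1)).biUnion
      (fun j => ((F k a n' (m - 1 + j)) ×ˢ BJ k k j).image (fun p => p.1 ++ p.2)) := by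
  ext L
  simp only [Finset.mem_biUnion, Finset.mem_range, Finset.mem_image, Finset.mem_product, Prod.exists]
  constructor
  · intro hL
    obtain ⟨hlen, hstep, hsum, hpre⟩ := (mem_F hk).mp hL
    set M := L.take (k * n') with hM
    set B := L.drop (k * n') with hB
    have hMlen : M.length = k * n' := by
      rw [hM, List.length_take, hlen]
      have : k * n' ≤ k * (n' + 1) := Nat.mul_le_mul_left _ (by omega)
      omega
    have hBlen : B.length = k := by
      rw [hB, List.length_drop, hlen]
      have : k * (n' + 1) = k * n' + k := by ring
      omega
    have hMstep : ∀ s ∈ M, s = 1 ∨ s = 1 - (k : ℤ) :=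
      fun s hs => hstep s ((List.take_sublist _ _).subset hs)
    have hBstep : ∀ s ∈ B, s = 1 ∨ s = 1 - (k : ℤ) :=
      fun s hs => hstep s (List.mem_of_mem_drop hs)
    set j := B.count (1 - (k : ℤ)) with hj
    have hjk : j ≤ k := hBlen ▸ (List.count_le_length : B.count (1 - (k : ℤ)) ≤ B.length)
    have hBsum : B.sum = (k : ℤ) - k * j := by
      rw [sum_eq_count hk hBstep, hBlen]
    have e1 : ((m - 1 + j : ℕ) : ℤ) = (m : ℤ) - 1 + j := by omega
    have hMsum : M.sum = (k : ℤ) * (m - 1 + j : ℕ) := by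
      have hsplit := take_drop_sum L (k * n')
      rw [← hM, ← hB, hsum, hBsum] at hsplit
      rw [e1]
      linarith
    refine ⟨j, by omega, M, B, ⟨?_, ?_⟩, List.take_append_drop _ _⟩
    · refine (mem_F hk).mpr ⟨hMlen, hMstep, hMsum, ?_⟩
      intro i
      have : M.take i = L.take (min i (k * n')) := by rw [hM, List.take_take]
      rw [this]; exact hpre _
    · exact (mem_BJ hk).mpr ⟨hBlen, hBstep, hj.symm⟩
  · rintro ⟨j, hjk, M, B, ⟨hMF, hBJ⟩, rfl⟩
    obtain ⟨hMlen, hMstep, hMsum, hMpre⟩ := (mem_F hk).mp hMF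
    obtain ⟨hBlen, hBstep, hBcount⟩ := (mem_BJ hk).mp hBJ
    have hBsum : B.sum = (k : ℤ) - k * j := by
      rw [sum_eq_count hk hBstep, hBlen, hBcount]
    have hm' : (1 : ℤ) ≤ (m : ℤ) := by exact_mod_cast hm
    have e1 : ((m - 1 + j : ℕ) : ℤ) = (m : ℤ) - 1 + j := by omega
    have hMsum' : M.sum = (k : ℤ) * m - k + k * j := by
      rw [hMsum, e1]; ring
    refine (mem_F hk).mpr ⟨?_, ?_, ?_, ?_⟩
    · rw [List.length_append, hMlen, hBlen]; ring
    · intro s hs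
      rcases List.mem_append.mp hs with h | h
      · exact hMstep s h
      · exact hBstep s h
    · rw [List.sum_append, hMsum', hBsum]; ring
    · intro i
      rw [List.take_append, List.sum_append, hMlen]
      rcases le_or_gt i (k * n') with hi | hi
      · rw [Nat.sub_eq_zero_of_le hi]
        simpa using hMpre i
      · rw [List.take_of_length_le (by omega : M.length ≤ i)]
        set t := i - k * n'
        have h1 : (B.take t).sum = B.sum - (B.drop t).sum := by
          have := take_drop_sum B t; omega
        have h2 : (B.drop t).sum ≤ ((B.drop t).length : ℤ) :=
          sum_le_length (fun s hs => by
            rcases hBstep s (List.mem_of_mem_drop hs) with h | h <;> simp [h] <;> omega)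
        have h3 : (B.drop t).length ≤ k := by
          rw [List.length_drop, hBlen]; omega
        have h3' : ((B.drop t).length : ℤ) ≤ (k : ℤ) := by exact_mod_cast h3
        have hjk' : (j : ℤ) ≤ (k : ℤ) := by exact_mod_cast Nat.lt_succ_iff.mp hjk
        have ha : (0 : ℤ) ≤ (a : ℤ) := by positivity
        have hkm : (k : ℤ) ≤ (k : ℤ) * m := le_mul_of_one_le_right (by positivity) hm'
        rw [hMsum']
        linarith
  

open Classical in
noncomputable def GBJ (k a j : ℕ) : Finset (List ℤ) :=
  (BJ k k j).filter (fun B => ¬ B.drop (k - a - 1) = List.replicate (a + 1) 1)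

open Classical in
lemma mem_GBJ {k a j : ℕ} (hk : 1 ≤ k) {B : List ℤ} :
    B ∈ GBJ k a j ↔ B ∈ BJ k k j ∧ ¬ B.drop (k - a - 1) = List.replicate (a + 1) 1 := by
  simp [GBJ]

lemma F_split_zero {k a n' : ℕ} (hk : 2 ≤ k) (ha : a + 1 ≤ k) :
    F k a (n' + 1) 0 = (Finset.Icc 1 k).biUnion
      (fun j => ((F k a n' (j - 1)) ×ˢ GBJ k a j).image (fun p => p.1 ++ p.2)) := by
  have hk1 : 1 ≤ k := by omega
  ext L
  simp only [Finset.mem_biUnion, Finset.mem_Icc, Finset.mem_image, Finset.mem_product, Prod.exists]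
  constructor
  · intro hL
    obtain ⟨hlen, hstep, hsum, hpre⟩ := (mem_F hk1).mp hL
    rw [Nat.cast_zero, mul_zero] at hsum
    set M := L.take (k * n') with hM
    set B := L.drop (k * n') with hB
    have hMlen : M.length = k * n' := by
      rw [hM, List.length_take, hlen]
      have : k * n' ≤ k * (n' + 1) := Nat.mul_le_mul_left _ (by omega)
      omega
    have hBlen : B.length = k := by
      rw [hB, List.length_drop, hlen]
      have : k * (n' + 1) = k * n' + k := by ring
      omega
    have hMstep : ∀ s ∈ M, s = 1 ∨ s = 1 - (k : ℤ) :=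
      fun s hs => hstep s ((List.take_sublist _ _).subset hs)
    have hBstep : ∀ s ∈ B, s = 1 ∨ s = 1 - (k : ℤ) :=
      fun s hs => hstep s (List.mem_of_mem_drop hs)
    set j := B.count (1 - (k : ℤ)) with hj
    have hjk : j ≤ k := hBlen ▸ (List.count_le_length : B.count (1 - (k : ℤ)) ≤ B.length)
    have hBsum : B.sum = (k : ℤ) - k * j := by
      rw [sum_eq_count hk1 hBstep, hBlen]
    have hsplit := take_drop_sum L (k * n')
    rw [← hM, ← hB, hsum, hBsum] at hsplit
    have hM0 := hpre (k * n')
    rw [← hM] at hM0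
    have hj1 : 1 ≤ j := by
      by_contra h
      have : j = 0 := by omega
      rw [this] at hsplit
      have ha' : (a : ℤ) + 1 ≤ (k : ℤ) := by exact_mod_cast ha
      push_cast at hsplit
      linarith
    have e1 : ((j - 1 : ℕ) : ℤ) = (j : ℤ) - 1 := by omega
    have hMsum : M.sum = (k : ℤ) * (j - 1 : ℕ) := by
      rw [e1]; linarith
    refine ⟨j, ⟨hj1, hjk⟩, M, B, ⟨?_, ?_⟩, List.take_append_drop _ _⟩
    · refine (mem_F hk1).mpr ⟨hMlen, hMstep, hMsum, ?_⟩
      intro i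
      have : M.take i = L.take (min i (k * n')) := by rw [hM, List.take_take]
      rw [this]; exact hpre _
    · refine (mem_GBJ hk1).mpr ⟨(mem_BJ hk1).mpr ⟨hBlen, hBstep, hj.symm⟩, ?_⟩
      intro hbad
      have hdd : L.drop (k * n' + (k - a - 1)) = B.drop (k - a - 1) := by
        rw [hB, List.drop_drop]
      have h1 := hpre (k * n' + (k - a - 1))
      have h2 := take_drop_sum L (k * n' + (k - a - 1))
      rw [hdd, hbad, hsum] at h2
      have : (List.replicate (a + 1) (1 : ℤ)).sum = (a : ℤ) + 1 := by
        rw [List.sum_replicate]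
        simp
      rw [this] at h2
      linarith
  · rintro ⟨j, ⟨hj1, hjk⟩, M, B, ⟨hMF, hBG⟩, rfl⟩
    obtain ⟨hBJ, hgood⟩ := (mem_GBJ hk1).mp hBG
    obtain ⟨hMlen, hMstep, hMsum, hMpre⟩ := (mem_F hk1).mp hMF
    obtain ⟨hBlen, hBstep, hBcount⟩ := (mem_BJ hk1).mp hBJ
    have hBsum : B.sum = (k : ℤ) - k * j := by
      rw [sum_eq_count hk1 hBstep, hBlen, hBcount]
    have e1 : ((j - 1 : ℕ) : ℤ) = (j : ℤ) - 1 := by omega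
    have hMsum' : M.sum = (k : ℤ) * j - k := by
      rw [hMsum, e1]; ring
    -- key: every suffix of B has sum at most a
    have hsuffix : ∀ t, (B.drop t).sum ≤ (a : ℤ) := by
      intro t
      rcases le_or_gt (k - a) t with ht | ht
      · have hlen' : (B.drop t).length ≤ a := by
          rw [List.length_drop, hBlen]; omega
        have := sum_le_length (L := B.drop t) (fun s hs => by
          rcases hBstep s (List.mem_of_mem_drop hs) with h | h <;> rw [h] <;> omega)
        have hc : ((B.drop t).length : ℤ) ≤ (a : ℤ) := by exact_mod_cast hlen'
        linarith
      · -- t ≤ k - a - 1 : the suffix contains the witness down-step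
        have hdd : B.drop (k - a - 1) = (B.drop t).drop (k - a - 1 - t) := by
          rw [List.drop_drop]
          congr 1
          omega
        have hrep : ∃ s ∈ B.drop (k - a - 1), s ≠ 1 := by
          by_contra hall
          push_neg at hall
          apply hgood
          apply List.eq_replicate_iff.mpr
          constructor
          · rw [List.length_drop, hBlen]; omega
          · exact hall
        obtain ⟨s, hs, hs1⟩ := hrep
        have hsB : s ∈ B := List.mem_of_mem_drop hs
        have hsval : s = 1 - (k : ℤ) := by
          rcases hBstep s hsB with h | h
          · exact absurd h hs1
          · exact h
        have hmem : (1 - (k : ℤ)) ∈ B.drop t := by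
          rw [← hsval]
          exact List.mem_of_mem_drop (hdd ▸ hs)
        have hsl := sum_le_length_sub (k := k) (L := B.drop t)
          (fun s hs => hBstep s (List.mem_of_mem_drop hs)) hmem
        have hlc : ((B.drop t).length : ℤ) ≤ (k : ℤ) := by
          rw [List.length_drop, hBlen]; push_cast; omega
        have ha0 : (0 : ℤ) ≤ (a : ℤ) := by positivity
        linarith
    refine (mem_F hk1).mpr ⟨?_, ?_, ?_, ?_⟩
    · rw [List.length_append, hMlen, hBlen]; ring
    · intro s hs
      rcases List.mem_append.mp hs with h | h
      · exact hMstep s h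
      · exact hBstep s h
    · rw [List.sum_append, hMsum', hBsum]; push_cast; ring
    · intro i
      rw [List.take_append, List.sum_append, hMlen]
      rcases le_or_gt i (k * n') with hi | hi
      · rw [Nat.sub_eq_zero_of_le hi]
        simpa using hMpre i
      · rw [List.take_of_length_le (by omega : M.length ≤ i)]
        set t := i - k * n'
        have h1 := take_drop_sum B t
        have h2 := hsuffix t
        rw [hMsum']
        linarith


open Classical in
lemma card_GBJ {k a j : ℕ} (hk : 1 ≤ k) (ha : a + 1 ≤ k) :
    (GBJ k a j).card = k.choose j - (k - a - 1).choose j := by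
  have hne := hne_step hk
  have hBad : (BJ k k j).filter (fun B => B.drop (k - a - 1) = List.replicate (a + 1) 1)
      = (BJ k (k - a - 1) j).image (fun M => M ++ List.replicate (a + 1) 1) := by
    ext B
    simp only [Finset.mem_filter, Finset.mem_image]
    constructor
    · rintro ⟨hBJ, hrep⟩
      obtain ⟨hlen, hstep, hcount⟩ := (mem_BJ hk).mp hBJ
      refine ⟨B.take (k - a - 1), ?_, ?_⟩
      · refine (mem_BJ hk).mpr ⟨?_, ?_, ?_⟩
        · rw [List.length_take, hlen]; omega
        · exact fun s hs => hstep s ((List.take_sublist _ _).subset hs)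
        · have := List.take_append_drop (k - a - 1) B
          have hcnt : B.count (1 - (k : ℤ))
              = (B.take (k - a - 1)).count (1 - (k : ℤ)) + (B.drop (k - a - 1)).count (1 - (k : ℤ)) := by
            conv_lhs => rw [← this]
            rw [List.count_append]
          rw [hrep] at hcnt
          have hzero : (List.replicate (a + 1) (1 : ℤ)).count (1 - (k : ℤ)) = 0 := by
            rw [List.count_replicate]
            simp [hne]
          omega
      · conv_rhs => rw [← List.take_append_drop (k - a - 1) B]
        rw [hrep]
    · rintro ⟨M, hM, rfl⟩
      obtain ⟨hlen, hstep, hcount⟩ := (mem_BJ hk).mp hM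
      have hdrop : (M ++ List.replicate (a + 1) (1 : ℤ)).drop (k - a - 1)
          = List.replicate (a + 1) 1 := by
        rw [← hlen, List.drop_left]
      refine ⟨(mem_BJ hk).mpr ⟨?_, ?_, ?_⟩, hdrop⟩
      · rw [List.length_append, hlen, List.length_replicate]; omega
      · intro s hs
        rcases List.mem_append.mp hs with h | h
        · exact hstep s h
        · left; exact List.eq_of_mem_replicate h
      · rw [List.count_append, List.count_replicate]
        simp [hne, hcount]
  have hcardBad : ((BJ k k j).filter
      (fun B => B.drop (k - a - 1) = List.replicate (a + 1) 1)).card = (k - a - 1).choose j := by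
    rw [hBad, Finset.card_image_of_injective _ (fun M N h => List.append_cancel_right h),
      card_BJ hk]
  have hsplit := Finset.card_filter_add_card_filter_not
    (s := BJ k k j) (p := fun B => B.drop (k - a - 1) = List.replicate (a + 1) 1)
  rw [card_BJ hk] at hsplit
  have : (GBJ k a j).card = ((BJ k k j).filter
      (fun B => ¬ B.drop (k - a - 1) = List.replicate (a + 1) 1)).card := by
    rw [GBJ]
  omega


lemma card_image_pair {k a n' c : ℕ} (hk : 1 ≤ k) (T : Finset (List ℤ)) :
    (((F k a n' c) ×ˢ T).image (fun p : List ℤ × List ℤ => p.1 ++ p.2)).card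
      = (F k a n' c).card * T.card := by
  rw [Finset.card_image_of_injOn, Finset.card_product]
  intro p hp q hq h
  simp only [Finset.mem_coe, Finset.mem_product] at hp hq
  have h1 : p.1.length = q.1.length := by
    rw [((mem_F hk).mp hp.1).1, ((mem_F hk).mp hq.1).1]
  obtain ⟨e1, e2⟩ := List.append_inj h h1
  exact Prod.ext e1 e2

lemma count_of_mem_image_pair {k a n' c j : ℕ} (hk : 1 ≤ k) {T : Finset (List ℤ)}
    (hT : ∀ B ∈ T, B ∈ BJ k k j) {L : List ℤ}
    (hL : L ∈ ((F k a n' c) ×ˢ T).image (fun p : List ℤ × List ℤ => p.1 ++ p.2)) :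
    (L.drop (k * n')).count (1 - (k : ℤ)) = j := by
  obtain ⟨p, hp, rfl⟩ := Finset.mem_image.mp hL
  rw [Finset.mem_product] at hp
  have h1 : p.1.length = k * n' := ((mem_F hk).mp hp.1).1
  rw [← h1, List.drop_left]
  exact ((mem_BJ hk).mp (hT _ hp.2)).2.2

end DyckAux

/-- Recursion for generalized `k`-Dyck paths of depth `a`. -/
theorem dyck_recursion (k a : ℕ) (hk : 2 ≤ k) (ha : a ≤ k - 1) (n : ℕ) (hn : 1 ≤ n) :
    (∀ m : ℕ, 1 ≤ m →
      D k a n m = ∑ j ∈ Finset.range (k + 1), k.choose j * D k a (n - 1) (m - 1 + j)) ∧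
    D k a n 0 =
      ∑ j ∈ Finset.Icc 1 k, (k.choose j - (k - a - 1).choose j) * D k a (n - 1) (j - 1) := by
  have hk1 : 1 ≤ k := by omega
  have ha1 : a + 1 ≤ k := by omega
  obtain ⟨n', rfl⟩ : ∃ n', n = n' + 1 := ⟨n - 1, by omega⟩
  simp only [Nat.add_sub_cancel]
  constructor
  · intro m hm
    rw [DyckAux.D_eq hk1, DyckAux.F_split_pos hk1 hm, Finset.card_biUnion ?disj]
    case disj =>
      intro j1 h1 j2 h2 hne
      rw [Function.onFun, Finset.disjoint_left]
      intro L hL1 hL2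
      have e1 := DyckAux.count_of_mem_image_pair hk1 (fun B hB => hB) hL1
      have e2 := DyckAux.count_of_mem_image_pair hk1 (fun B hB => hB) hL2
      exact hne (e1 ▸ e2 ▸ rfl)
    refine Finset.sum_congr rfl (fun j hj => ?_)
    rw [DyckAux.card_image_pair hk1, DyckAux.card_BJ hk1, DyckAux.D_eq hk1, mul_comm]
  · rw [DyckAux.D_eq hk1, DyckAux.F_split_zero hk ha1, Finset.card_biUnion ?disj0]
    case disj0 =>
      intro j1 h1 j2 h2 hne
      rw [Function.onFun, Finset.disjoint_left]
      intro L hL1 hL2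
      have hsub : ∀ j, ∀ B ∈ DyckAux.GBJ k a j, B ∈ DyckAux.BJ k k j :=
        fun j B hB => ((DyckAux.mem_GBJ hk1).mp hB).1
      have e1 := DyckAux.count_of_mem_image_pair hk1 (hsub j1) hL1
      have e2 := DyckAux.count_of_mem_image_pair hk1 (hsub j2) hL2
      exact hne (e1 ▸ e2 ▸ rfl)
    refine Finset.sum_congr rfl (fun j hj => ?_)
    rw [DyckAux.card_image_pair hk1, DyckAux.card_GBJ hk1 ha1, DyckAux.D_eq hk1, mul_comm]
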